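/- arXiv:2605.03332 — 3 statements merged into one kernel-verified Lean document; each statement's English description precedes it below -/
import Mathlib

section
/- Let (X,d) be a doubling metric space (every ball of radius R contains at most N points mutually ≥ R/2 apart) and O an open subset with X \ O nonempty. Then there exists a countable collection of balls {B(x_i, r_i)} with r_i = dist(x_i, X \ O)/8, whose union is O, and such that the doubled balls B(x_i, 2r_i) have overlap bounded by 2N⁵ (i.e., ∑_i χ_{B(x_i, 2r_i)} ≤ 2N⁵ pointwise). -/
open Metric

private lemma iter_doub {X : Type*} [MetricSpace X] {N : ℕ}
    (hdoub : ∀ (x : X) (R : ℝ), 0 < R → ∃ S : Finset X, S.card ≤ N ∧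
      ball x R ⊆ ⋃ y ∈ S, ball y (R / 2)) :
    ∀ (k : ℕ) (x : X) (R : ℝ), 0 < R → ∃ S : Finset X, S.card ≤ N ^ k ∧
      ball x R ⊆ ⋃ y ∈ S, ball y (R / 2 ^ k) := by
  classical
  intro k
  induction k with
  | zero =>
    intro x R hR
    exact ⟨{x}, by simp, by simp⟩
  | succ k ih =>
    intro x R hR
    obtain ⟨F, hFc, hFcov⟩ := ih x R hR
    choose G hGc hGcov using fun y : X => hdoub y (R / 2 ^ k) (by positivity)
    refine ⟨F.biUnion G, ?_, ?_⟩
    · calc (F.biUnion G).card ≤ ∑ y ∈ F, (G y).card := Finset.card_biUnion_le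
        _ ≤ ∑ _y ∈ F, N := Finset.sum_le_sum fun y _ => hGc y
        _ = F.card * N := by simp [Finset.sum_const, smul_eq_mul]
        _ ≤ N ^ k * N := Nat.mul_le_mul_right _ hFc
        _ = N ^ (k + 1) := (pow_succ N k).symm
    · intro z hz
      obtain ⟨y, hyF, hzy⟩ := Set.mem_iUnion₂.1 (hFcov hz)
      obtain ⟨w, hwG, hzw⟩ := Set.mem_iUnion₂.1 (hGcov y hzy)
      refine Set.mem_iUnion₂.2 ⟨w, Finset.mem_biUnion.2 ⟨y, hyF, hwG⟩, ?_⟩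
      have hh : R / 2 ^ k / 2 = R / 2 ^ (k + 1) := by rw [div_div, ← pow_succ]
      rwa [hh] at hzw

private lemma sep_count {X : Type*} [MetricSpace X] {N : ℕ}
    (hdoub : ∀ (x : X) (R : ℝ), 0 < R → ∃ S : Finset X, S.card ≤ N ∧
      ball x R ⊆ ⋃ y ∈ S, ball y (R / 2))
    {T : Set X} {x : X} {R s : ℝ} (hR : 0 < R)
    (hT : T ⊆ ball x R) (k : ℕ) (hk : 2 * (R / 2 ^ k) ≤ s)
    (hsep : T.Pairwise fun a b => s ≤ dist a b) :
    T.Finite ∧ T.ncard ≤ N ^ k := by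
  obtain ⟨F, hFc, hFcov⟩ := iter_doub hdoub k x R hR
  have hch : ∀ t : ↥T, ∃ y, y ∈ F ∧ (t : X) ∈ ball y (R / 2 ^ k) := fun t => by
    simpa using Set.mem_iUnion₂.1 (hFcov (hT t.2))
  choose g hgF hgb using hch
  have hinj : Function.Injective fun t : ↥T => (⟨g t, hgF t⟩ : ↥F) := by
    intro a b hab
    have hgab : g a = g b := congrArg Subtype.val hab
    by_contra hne
    have hne' : (a : X) ≠ (b : X) := fun h => hne (Subtype.ext h)
    have h1 : dist (a : X) (b : X) < s := by
      calc dist (a : X) (b : X) ≤ dist (a : X) (g a) + dist (g b) (b : X) := by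
            rw [hgab]; exact dist_triangle _ _ _
        _ < R / 2 ^ k + R / 2 ^ k := by
            have ha' := mem_ball.1 (hgb a)
            have hb' := mem_ball.1 (hgb b)
            rw [dist_comm (g b)]
            exact add_lt_add ha' hb'
        _ ≤ s := by linarith
    exact absurd (hsep a.2 b.2 hne') (not_le.2 h1)
  haveI : Finite ↥F := Finite.of_fintype _
  haveI : Finite ↥T := Finite.of_injective _ hinj
  refine ⟨T.toFinite, ?_⟩
  calc T.ncard = Nat.card ↥T := (Nat.card_coe_set_eq T).symm
    _ ≤ Nat.card ↥F := Nat.card_le_card_of_injective _ hinj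
    _ = F.card := Nat.card_eq_finsetCard F
    _ ≤ N ^ k := hFc

/-- Whitney ball decomposition of an open set `O` (with nonempty complement) in an
`N`-doubling metric space: countably many balls `B(x_i, r_i)` with
`r_i = dist(x_i, X \ O)/8`, whose union is `O`, and whose doubled balls have
pointwise overlap at most `2 N⁵`. -/
theorem stmt_5 {X : Type*} [MetricSpace X] (N : ℕ)
    (hdoub : ∀ (x : X) (R : ℝ), 0 < R → ∃ S : Finset X, S.card ≤ N ∧
      ball x R ⊆ ⋃ y ∈ S, ball y (R / 2))
    (O : Set X) (hO : IsOpen O) (hne : Oᶜ.Nonempty) :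
    ∃ (ι : Type) (_ : Countable ι) (c : ι → X) (rad : ι → ℝ),
      (∀ i, rad i = infDist (c i) Oᶜ / 8) ∧
      O = ⋃ i, ball (c i) (rad i) ∧
      ∀ x : X, {i : ι | x ∈ ball (c i) (2 * rad i)}.ncard ≤ 2 * N ^ 5 := by
  classical
  set r : X → ℝ := fun x => infDist x Oᶜ / 8 with hr
  have hOc : IsClosed Oᶜ := hO.isClosed_compl
  have hdpos : ∀ x ∈ O, 0 < infDist x Oᶜ := by
    intro x hx
    exact (hOc.notMem_iff_infDist_pos hne).1 (by simpa using hx)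
  have hrpos : ∀ x ∈ O, 0 < r x := by
    intro x hx
    have := hdpos x hx
    simp only [hr]
    positivity
  have hrdef : ∀ x : X, r x = infDist x Oᶜ / 8 := fun x => rfl
  -- N ≥ 1
  have hN1 : 1 ≤ N := by
    obtain ⟨p, hp⟩ := hne
    obtain ⟨F, hFc, hFcov⟩ := hdoub p 1 one_pos
    obtain ⟨y, hyF, -⟩ := Set.mem_iUnion₂.1 (hFcov (mem_ball_self one_pos))
    exact le_trans (Finset.one_le_card.2 ⟨y, hyF⟩) hFc
  have hsymm : Symmetric fun a b : X => min (r a) (r b) ≤ dist a b := by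
    intro a b h; rwa [min_comm, dist_comm]
  -- a maximal separated set
  have hchaincond : ∀ c ⊆ {S : Set X | S ⊆ O ∧
      S.Pairwise fun a b => min (r a) (r b) ≤ dist a b}, IsChain (· ⊆ ·) c →
      ∃ ub ∈ {S : Set X | S ⊆ O ∧ S.Pairwise fun a b => min (r a) (r b) ≤ dist a b},
        ∀ s ∈ c, s ⊆ ub := by
    intro c hc hchain
    refine ⟨⋃₀ c, ⟨?_, ?_⟩, fun s hs => Set.subset_sUnion_of_mem hs⟩
    · exact Set.sUnion_subset fun s hs => (hc hs).1
    · intro a ha b hb hab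
      obtain ⟨sa, hsa, has⟩ := ha
      obtain ⟨sb, hsb, hbs⟩ := hb
      rcases hchain.total hsa hsb with h | h
      · exact (hc hsb).2 (h has) hbs hab
      · exact (hc hsa).2 has (h hbs) hab
  obtain ⟨M, hM⟩ := zorn_subset
      {S : Set X | S ⊆ O ∧ S.Pairwise fun a b => min (r a) (r b) ≤ dist a b} hchaincond
  obtain ⟨hMO, hMsep⟩ := hM.prop
  -- the balls over M cover O
  have hcover : O = ⋃ x ∈ M, ball x (r x) := by
    apply Set.Subset.antisymm
    · intro z hz
      by_cases hzcov : ∃ x ∈ M, dist x z < min (r x) (r z)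
      · obtain ⟨x, hxM, hxz⟩ := hzcov
        refine Set.mem_iUnion₂.2 ⟨x, hxM, ?_⟩
        rw [mem_ball, dist_comm]
        exact hxz.trans_le (min_le_left _ _)
      · push_neg at hzcov
        have hins : insert z M ∈
            {S : Set X | S ⊆ O ∧ S.Pairwise fun a b => min (r a) (r b) ≤ dist a b} := by
          constructor
          · exact Set.insert_subset hz hMO
          · haveI : Std.Symm (fun a b : X => min (r a) (r b) ≤ dist a b) := ⟨fun a b h => hsymm h⟩
            rw [Set.pairwise_insert_of_symm]
            exact ⟨hMsep, fun b hb hzb => by rw [min_comm, dist_comm]; exact hzcov b hb⟩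
        have hzM : z ∈ M := hM.2 hins (Set.subset_insert _ _) (Set.mem_insert _ _)
        exact Set.mem_iUnion₂.2 ⟨z, hzM, mem_ball_self (hrpos z hz)⟩
    · refine Set.iUnion₂_subset fun x hx => fun y hy => ?_
      by_contra hyO
      have h1 : infDist x Oᶜ ≤ dist x y := infDist_le_dist_of_mem (by simpa using hyO)
      have h2 : dist y x < r x := mem_ball.1 hy
      have h3 : 0 < infDist x Oᶜ := hdpos x (hMO hx)
      rw [hrdef x] at h2
      have hdc : dist y x = dist x y := dist_comm y x
      linarith
  -- bounded overlap
  have hoverlap : ∀ z : X, {x | x ∈ M ∧ dist z x < 2 * r x}.Finite ∧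
      {x | x ∈ M ∧ dist z x < 2 * r x}.ncard ≤ N ^ 3 := by
    intro z
    set T := {x | x ∈ M ∧ dist z x < 2 * r x} with hTdef
    rcases T.eq_empty_or_nonempty with h | ⟨x0, hx0⟩
    · rw [h]; simp
    · have hdz : 0 < infDist z Oᶜ := by
        have h1 : infDist x0 Oᶜ ≤ infDist z Oᶜ + dist x0 z := infDist_le_infDist_add_dist
        have h2 : dist z x0 < 2 * r x0 := hx0.2
        have h3 : 0 < infDist x0 Oᶜ := hdpos x0 (hMO hx0.1)
        rw [hrdef x0] at h2
        have hdc : dist x0 z = dist z x0 := dist_comm x0 z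
        linarith
      have hsub : T ⊆ ball z (infDist z Oᶜ / 3) := by
        intro x hx
        have h1 : infDist x Oᶜ ≤ infDist z Oᶜ + dist x z := infDist_le_infDist_add_dist
        have h2 : dist z x < 2 * r x := hx.2
        rw [hrdef x] at h2
        have hdc : dist x z = dist z x := dist_comm x z
        rw [mem_ball]
        linarith
      have hsep3 : T.Pairwise fun a b => infDist z Oᶜ / 10 ≤ dist a b := by
        intro a ha b hb hab
        have hra : infDist z Oᶜ / 10 ≤ r a := by
          have h1 : infDist z Oᶜ ≤ infDist a Oᶜ + dist z a := infDist_le_infDist_add_dist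
          have h2 : dist z a < 2 * r a := ha.2
          rw [hrdef a] at h2 ⊢
          linarith
        have hrb : infDist z Oᶜ / 10 ≤ r b := by
          have h1 : infDist z Oᶜ ≤ infDist b Oᶜ + dist z b := infDist_le_infDist_add_dist
          have h2 : dist z b < 2 * r b := hb.2
          rw [hrdef b] at h2 ⊢
          linarith
        exact le_trans (le_min hra hrb) (hMsep ha.1 hb.1 hab)
      have hk : 2 * (infDist z Oᶜ / 3 / 2 ^ 3) ≤ infDist z Oᶜ / 10 := by
        have h8 : (2 : ℝ) ^ 3 = 8 := by norm_num
        rw [h8]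
        linarith
      exact sep_count hdoub (by positivity) hsub 3 hk hsep3
  -- countability
  have hMcount : M.Countable := by
    obtain ⟨p, hp⟩ := hne
    have hsub : M ⊆ ⋃ nm : ℕ × ℕ,
        {x | x ∈ M ∧ 1 / ((nm.1 : ℝ) + 1) ≤ r x ∧ dist p x < (nm.2 : ℝ) + 1} := by
      intro x hx
      obtain ⟨n, hn⟩ := exists_nat_one_div_lt (hrpos x (hMO hx))
      obtain ⟨m, hm⟩ := exists_nat_gt (dist p x)
      refine Set.mem_iUnion.2 ⟨(n, m), hx, hn.le, ?_⟩
      have : (m : ℝ) ≤ (m : ℝ) + 1 := by linarith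
      linarith
    refine Set.Countable.mono hsub (Set.countable_iUnion fun nm => ?_)
    obtain ⟨k, hk⟩ := pow_unbounded_of_one_lt
      (2 * ((nm.2 : ℝ) + 1) * ((nm.1 : ℝ) + 1)) (one_lt_two)
    have hRk : 2 * (((nm.2 : ℝ) + 1) / 2 ^ k) ≤ 1 / ((nm.1 : ℝ) + 1) := by
      have heq : 2 * (((nm.2 : ℝ) + 1) / 2 ^ k) = (2 * ((nm.2 : ℝ) + 1)) / 2 ^ k := by ring
      rw [heq, div_le_div_iff₀ (by positivity) (by positivity), one_mul]
      exact hk.le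
    have hsubb : {x | x ∈ M ∧ 1 / ((nm.1 : ℝ) + 1) ≤ r x ∧ dist p x < (nm.2 : ℝ) + 1}
        ⊆ ball p ((nm.2 : ℝ) + 1) := by
      intro x hx
      rw [mem_ball, dist_comm]
      exact hx.2.2
    have hsepn : {x | x ∈ M ∧ 1 / ((nm.1 : ℝ) + 1) ≤ r x ∧ dist p x < (nm.2 : ℝ) + 1}.Pairwise
        fun a b => 1 / ((nm.1 : ℝ) + 1) ≤ dist a b := by
      intro a ha b hb hab
      exact le_trans (le_min ha.2.1 hb.2.1) (hMsep ha.1 hb.1 hab)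
    exact ((sep_count hdoub (by positivity) hsubb k hRk hsepn).1).countable
  -- assemble the answer
  haveI := hMcount.to_subtype
  obtain ⟨e, he⟩ := exists_injective_nat ↥M
  let eqv : ↥(Set.range e) ≃ ↥M := (Equiv.ofInjective e he).symm
  have hcinj : Function.Injective fun i : ↥(Set.range e) => ((eqv i : X)) := by
    intro a b h
    exact eqv.injective (Subtype.ext h)
  refine ⟨↥(Set.range e), inferInstance, fun i => (eqv i : X),
    fun i => infDist ((eqv i : X)) Oᶜ / 8, fun i => rfl, ?_, ?_⟩
  · conv_lhs => rw [hcover]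
    ext z
    simp only [Set.mem_iUnion, exists_prop]
    constructor
    · rintro ⟨x, hxM, hz⟩
      refine ⟨eqv.symm ⟨x, hxM⟩, ?_⟩
      have hxx : ((eqv (eqv.symm ⟨x, hxM⟩) : X)) = x := by
        rw [eqv.apply_symm_apply]
      rw [hxx]
      exact hz
    · rintro ⟨i, hz⟩
      exact ⟨(eqv i : X), (eqv i).2, hz⟩
  · intro z
    have h3 : {i : ↥(Set.range e) |
          z ∈ ball (eqv i : X) (2 * (infDist ((eqv i : X)) Oᶜ / 8))}.ncard
        ≤ {x | x ∈ M ∧ dist z x < 2 * r x}.ncard := by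
      refine Set.ncard_le_ncard_of_injOn (fun i => (eqv i : X)) ?_ hcinj.injOn (hoverlap z).1
      intro i hi
      exact ⟨(eqv i).2, mem_ball.1 hi⟩
    calc {i : ↥(Set.range e) |
          z ∈ ball (eqv i : X) (2 * (infDist ((eqv i : X)) Oᶜ / 8))}.ncard
        ≤ N ^ 3 := h3.trans (hoverlap z).2
      _ ≤ N ^ 5 := Nat.pow_le_pow_right hN1 (by norm_num)
      _ ≤ 2 * N ^ 5 := Nat.le_mul_of_pos_left _ (by norm_num)
end

section
/- Let X_r be a maximal r-separated subset of a doubling metric space X with graph x̄ ∼ ȳ iff 0 < d(x̄,ȳ) ≤ 3r, and let u : X_r → ℝ. Define the Whitney projection P_r u by P_r u(x) = u(x̄) for x ∈ B̄(x̄, r/4) and P_r u(x) = ∑_i u(x̄_i) φ_i(x) on O = X \ ⋃_{x̄} B̄(x̄, r/4), where {φ_i} is a Whitney partition of unity for O and x̄_i ∈ X_r realizes dist(x_i, ⋃ B̄(x̄, r/4)). Then P_r u is locally Lipschitz: there is a constant C, depending only on the doubling data, such that |P_r u(x) − P_r u(y)| ≤ C (sup_{w̄ ∈ X_r ∩ B(x,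 3r)} |∇_r u|(w̄)) d(x,y) whenever d(x,y) < r, where |∇_r u|(w̄) = ∑_{ȳ ∼ w̄} |u(w̄) − u(ȳ)|/r. -/
open Metric

/-- The discrete gradient of `u` on the graph `Xr` (neighbors iff `0 < d ≤ 3r`):
`|∇_r u|(w) = ∑_{y ∼ w} |u(w) - u(y)|/r`. -/
noncomputable def discreteGrad {X : Type*} [MetricSpace X]
    (r : ℝ) (Xr : Set X) (u : X → ℝ) (w : X) : ℝ :=
  ∑' y : {y : X // y ∈ Xr ∧ 0 < dist w y ∧ dist w y ≤ 3 * r}, |u w - u (y : X)| / r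

set_option maxHeartbeats 2000000 in
/-- The Whitney projection `P_r u` of a discrete function `u : X_r → ℝ`
(equal to `u(x̄)` on each closed ball `B̄(x̄, r/4)` and glued via a Whitney
partition of unity on the complement `O`) is locally Lipschitz, with local
Lipschitz constant controlled by the supremum of the discrete gradient of `u`
over `X_r ∩ B(x, 3r)`. -/
theorem stmt_12 {X : Type*} [MetricSpace X] (N : ℕ)
    (hdoub : ∀ (x : X) (R : ℝ), 0 < R → ∃ S : Finset X, S.card ≤ N ∧
      ball x R ⊆ ⋃ y ∈ S, ball y (R / 2))
    (r : ℝ) (hr : 0 < r) (Xr : Set X)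
    (hsep : ∀ x ∈ Xr, ∀ y ∈ Xr, x ≠ y → r ≤ dist x y)
    (hmaxsep : ∀ x : X, ∃ a ∈ Xr, dist x a < r)
    (u : X → ℝ)
    (O : Set X) (hO : O = (⋃ xb ∈ Xr, closedBall xb (r / 4))ᶜ)
    -- Whitney decomposition of `O` with subordinate Lipschitz partition of unity
    (ι : Type) (hι : Countable ι) (c : ι → X) (rad : ι → ℝ) (C₀ : ℝ) (hC₀ : 1 ≤ C₀)
    (hrad : ∀ i, rad i = infDist (c i) Oᶜ / 8)
    (hcover : O = ⋃ i, ball (c i) (rad i))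
    (φ : ι → X → ℝ)
    (hφsupp : ∀ i, ∀ x ∉ ball (c i) (2 * rad i), φ i x = 0)
    (hφcount : ∀ x ∈ O, ({i : ι | φ i x ≠ 0}).Finite ∧ ({i : ι | φ i x ≠ 0}).ncard ≤ C₀)
    (hφ01 : ∀ i x, 0 ≤ φ i x ∧ φ i x ≤ 1)
    (hφlow : ∀ i, ∀ x ∈ ball (c i) (rad i), C₀⁻¹ ≤ φ i x)
    (hφlip : ∀ i, ∀ x y : X, |φ i x - φ i y| ≤ (C₀ / rad i) * dist x y)
    (hφsum : ∀ x ∈ O, ∑' i, φ i x = 1)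
    -- nearest points of `X_r` to the Whitney centers
    (xb : ι → X) (hxb : ∀ i, xb i ∈ Xr ∧
      infDist (c i) Oᶜ = infDist (c i) (closedBall (xb i) (r / 4)))
    -- the Whitney projection
    (P : X → ℝ)
    (hP1 : ∀ w ∈ Xr, ∀ x ∈ closedBall w (r / 4), P x = u w)
    (hP2 : ∀ x ∈ O, P x = ∑' i, u (xb i) * φ i x) :
    ∃ C : ℝ, 0 < C ∧ ∀ x y : X, dist x y < r →
      |P x - P y| ≤
        C * sSup ((fun w => discreteGrad r Xr u w) '' (Xr ∩ ball x (3 * r))) * dist x y := by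
  classical
  -- finiteness of `Xr ∩ ball z R`
  have hfin : ∀ (z : X) (R : ℝ), (Xr ∩ ball z R).Finite := by
    have key : ∀ (k : ℕ) (z : X) (R : ℝ), R ≤ r / 2 * 2 ^ k → (Xr ∩ ball z R).Finite := by
      intro k
      induction k with
      | zero =>
        intro z R hR
        simp only [pow_zero, mul_one] at hR
        apply Set.Subsingleton.finite
        rintro p ⟨hp, hpz⟩ q ⟨hq, hqz⟩
        by_contra hne
        have h1 := hsep p hp q hq hne
        have h3 := mem_ball.1 hpz
        have h4 := mem_ball.1 hqz
        have h5 := dist_triangle p z q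
        have h6 := dist_comm z q
        have h7 := dist_comm q z
        linarith
      | succ k ih =>
        intro z R hR
        rcases le_or_gt R 0 with h0 | h0
        · rw [ball_eq_empty.2 h0, Set.inter_empty]
          exact Set.finite_empty
        · obtain ⟨S, -, hS⟩ := hdoub z R h0
          have hsub : Xr ∩ ball z R ⊆ ⋃ p ∈ (S : Set X), (Xr ∩ ball p (R / 2)) := by
            rintro q ⟨hq, hqz⟩
            obtain ⟨p, hp, hqp⟩ := Set.mem_iUnion₂.1 (hS hqz)
            exact Set.mem_iUnion₂.2 ⟨p, hp, hq, hqp⟩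
          refine Set.Finite.subset
            (Set.Finite.biUnion S.finite_toSet fun p _ => ih p (R / 2) ?_) hsub
          rw [pow_succ] at hR
          linarith
    intro z R
    obtain ⟨n, hn⟩ := exists_nat_gt (R / (r / 2))
    have h2n : (n : ℝ) ≤ 2 ^ n := by
      exact_mod_cast Nat.le_of_lt (Nat.lt_two_pow_self (n := n))
    refine key n z R ?_
    have hr2 : (0 : ℝ) < r / 2 := by linarith
    rw [div_lt_iff₀ hr2] at hn
    nlinarith [pow_pos (by norm_num : (0:ℝ) < 2) n]
  refine ⟨640 * C₀ ^ 2, by nlinarith, ?_⟩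
  intro x y hxy
  set G := sSup ((fun w => discreteGrad r Xr u w) '' (Xr ∩ ball x (3 * r))) with hGdef
  have hOc : Oᶜ = ⋃ w ∈ Xr, closedBall w (r / 4) := by rw [hO, compl_compl]
  have hGnn : 0 ≤ G := by
    apply Real.sSup_nonneg
    rintro g ⟨w, -, rfl⟩
    exact tsum_nonneg fun yy => by positivity
  have hGdxy : 0 ≤ G * dist x y := mul_nonneg hGnn dist_nonneg
  have hC2 : 1 ≤ C₀ ^ 2 := by nlinarith
  -- the hop lemma
  have hop : ∀ p q : X, p ∈ Xr → dist x p < 3 * r → q ∈ Xr → dist p q ≤ 3 * r →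
      |u p - u q| ≤ r * G := by
    intro p q hp hpx hq hpq
    rcases eq_or_ne p q with rfl | hne
    · simpa using mul_nonneg hr.le hGnn
    · have hpq0 : 0 < dist p q := dist_pos.2 hne
      have hsetfin : {z : X | z ∈ Xr ∧ 0 < dist p z ∧ dist p z ≤ 3 * r}.Finite := by
        refine (hfin p (4 * r)).subset ?_
        rintro z ⟨hz1, -, hz3⟩
        refine ⟨hz1, ?_⟩
        rw [mem_ball, dist_comm]
        linarith
      haveI : Finite {z : X // z ∈ Xr ∧ 0 < dist p z ∧ dist p z ≤ 3 * r} := hsetfin.to_subtype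
      have hsummable : Summable (fun z : {z : X // z ∈ Xr ∧ 0 < dist p z ∧ dist p z ≤ 3 * r} =>
          |u p - u (z : X)| / r) := Summable.of_finite
      have hterm : |u p - u q| / r ≤ discreteGrad r Xr u p :=
        Summable.le_tsum hsummable ⟨q, hq, hpq0, hpq⟩ fun j _ => by positivity
      have hmem : discreteGrad r Xr u p ≤ G := by
        apply le_csSup ((hfin x (3 * r)).image _).bddAbove
        exact ⟨p, ⟨hp, by rwa [mem_ball, dist_comm]⟩, rfl⟩
      calc |u p - u q| = r * (|u p - u q| / r) := by field_simp
        _ ≤ r * G := mul_le_mul_of_nonneg_left (hterm.trans hmem) hr.le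
  -- every point is within distance `< r` of `Oᶜ`
  have hinf : ∀ z : X, infDist z Oᶜ < r := by
    intro z
    obtain ⟨a, ha, hza⟩ := hmaxsep z
    have haOc : a ∈ Oᶜ := by
      rw [hOc]
      exact Set.mem_biUnion ha (mem_closedBall_self (by linarith))
    exact lt_of_le_of_lt (infDist_le_dist_of_mem haOc) hza
  -- Whitney ball geometry
  have whit : ∀ (i : ι) (z : X), z ∈ ball (c i) (2 * rad i) →
      0 < rad i ∧ 6 * rad i ≤ infDist z Oᶜ ∧ infDist z Oᶜ ≤ 10 * rad i ∧
        dist z (xb i) ≤ 10 * rad i + r / 4 := by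
    intro i z hz
    have hdz : dist z (c i) < 2 * rad i := mem_ball.1 hz
    have hradpos : 0 < rad i := by
      have := dist_nonneg (x := z) (y := c i)
      linarith
    have hinfc : infDist (c i) Oᶜ = 8 * rad i := by rw [hrad i]; ring
    have h1 : infDist z Oᶜ ≤ infDist (c i) Oᶜ + dist z (c i) := infDist_le_infDist_add_dist
    have h2 : infDist (c i) Oᶜ ≤ infDist z Oᶜ + dist (c i) z := infDist_le_infDist_add_dist
    rw [dist_comm (c i) z] at h2
    have hdcxb : dist (c i) (xb i) ≤ 8 * rad i + r / 4 := by
      by_contra hcon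
      push_neg at hcon
      have hinfcb : infDist (c i) (closedBall (xb i) (r / 4)) = 8 * rad i := by
        rw [← (hxb i).2, hinfc]
      have hne : (closedBall (xb i) (r / 4)).Nonempty :=
        ⟨xb i, mem_closedBall_self (by linarith)⟩
      have hlt : infDist (c i) (closedBall (xb i) (r / 4)) < dist (c i) (xb i) - r / 4 := by
        rw [hinfcb]; linarith
      obtain ⟨p, hp, hplt⟩ := (infDist_lt_iff hne).1 hlt
      have hpxb : dist p (xb i) ≤ r / 4 := mem_closedBall.1 hp
      have := dist_triangle (c i) p (xb i)
      linarith
    refine ⟨hradpos, by linarith, by linarith, ?_⟩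
    calc dist z (xb i) ≤ dist z (c i) + dist (c i) (xb i) := dist_triangle _ _ _
      _ ≤ 10 * rad i + r / 4 := by linarith
  have hradr : ∀ (i : ι) (z : X), z ∈ ball (c i) (2 * rad i) → rad i < r / 6 := by
    intro i z hz
    have h := whit i z hz
    have := hinf z
    linarith [h.2.1]
  have hsupp' : ∀ (i : ι) (z : X), φ i z ≠ 0 → z ∈ ball (c i) (2 * rad i) := by
    intro i z h
    by_contra hc
    exact h (hφsupp i z hc)
  -- the mixed case: one point in a ball `closedBall w (r/4)`, the other in `O`
  have mixed : ∀ (z₁ z₂ w : X), w ∈ Xr → z₁ ∈ closedBall w (r / 4) → z₂ ∈ O →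
      dist x z₂ ≤ dist x y → dist z₂ z₁ < r →
      |P z₂ - u w| ≤ 640 * C₀ ^ 2 * G * dist z₂ z₁ := by
    intro z₁ z₂ w hw hz₁ hz₂ hxz₂ hzz
    obtain ⟨hfinz, hcard⟩ := hφcount z₂ hz₂
    set s : Finset ι := hfinz.toFinset with hsdef
    have hPz₂ : P z₂ = ∑ i ∈ s, u (xb i) * φ i z₂ := by
      rw [hP2 z₂ hz₂]
      apply tsum_eq_sum
      intro i hi
      have hz : φ i z₂ = 0 := by
        by_contra hc
        exact hi (hfinz.mem_toFinset.2 hc)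
      rw [hz, mul_zero]
    have hsum1 : ∑ i ∈ s, φ i z₂ = 1 := by
      rw [← hφsum z₂ hz₂]
      symm
      apply tsum_eq_sum
      intro i hi
      by_contra hc
      exact hi (hfinz.mem_toFinset.2 hc)
    have hexpand : P z₂ - u w = ∑ i ∈ s, (u (xb i) - u w) * φ i z₂ := by
      have he : ∑ i ∈ s, (u (xb i) - u w) * φ i z₂
          = (∑ i ∈ s, u (xb i) * φ i z₂) - u w * ∑ i ∈ s, φ i z₂ := by
        rw [Finset.mul_sum, ← Finset.sum_sub_distrib]
        exact Finset.sum_congr rfl fun i _ => by ring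
      rw [he, hsum1, hPz₂]; ring
    have hz₁Oc : z₁ ∈ Oᶜ := by
      rw [hOc]; exact Set.mem_biUnion hw hz₁
    have hinfz₂ : infDist z₂ Oᶜ ≤ dist z₂ z₁ := infDist_le_dist_of_mem hz₁Oc
    by_cases hall : ∀ i ∈ s, xb i = w
    · have hzero : P z₂ - u w = 0 := by
        rw [hexpand]
        apply Finset.sum_eq_zero
        intro i hi
        rw [hall i hi]; ring
      rw [hzero, abs_zero]
      have hGz0 : 0 ≤ G * dist z₂ z₁ := mul_nonneg hGnn dist_nonneg
      nlinarith [mul_nonneg (show (0:ℝ) ≤ C₀ ^ 2 by positivity) hGz0]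
    · push_neg at hall
      obtain ⟨i₁, hi₁s, hi₁⟩ := hall
      have hφi₁ : φ i₁ z₂ ≠ 0 := hfinz.mem_toFinset.1 hi₁s
      have hball₁ := hsupp' i₁ z₂ hφi₁
      obtain ⟨hrp₁, hl₁, hu₁, hd₁⟩ := whit i₁ z₂ hball₁
      have hsep₁ : r ≤ dist (xb i₁) w := hsep _ (hxb i₁).1 _ hw hi₁
      have hz₁w : dist z₁ w ≤ r / 4 := mem_closedBall.1 hz₁
      have hdlow : 3 * r / 16 ≤ dist z₂ z₁ := by
        have ht : dist (xb i₁) w ≤ dist (xb i₁) z₂ + dist z₂ z₁ + dist z₁ w :=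
          dist_triangle4 _ _ _ _
        have hcomm : dist (xb i₁) z₂ = dist z₂ (xb i₁) := dist_comm _ _
        linarith
      have hterm : ∀ i ∈ s, |u (xb i) - u w| * φ i z₂ ≤ 2 * (r * G) * φ i z₂ := by
        intro i hi
        have hφi : φ i z₂ ≠ 0 := hfinz.mem_toFinset.1 hi
        have hball := hsupp' i z₂ hφi
        obtain ⟨hrp, hl, hu', hd⟩ := whit i z₂ hball
        have hradi : rad i < r / 6 := hradr i z₂ hball
        obtain ⟨a'', ha'', hza''⟩ := hmaxsep z₂
        have hxa'' : dist x a'' < 3 * r := by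
          calc dist x a'' ≤ dist x z₂ + dist z₂ a'' := dist_triangle _ _ _
            _ < 3 * r := by linarith
        have h1 : |u (xb i) - u a''| ≤ r * G := by
          rw [abs_sub_comm]
          apply hop a'' (xb i) ha'' hxa'' (hxb i).1 ?_
          calc dist a'' (xb i) ≤ dist a'' z₂ + dist z₂ (xb i) := dist_triangle _ _ _
            _ ≤ 3 * r := by linarith [dist_comm a'' z₂]
        have h2 : |u a'' - u w| ≤ r * G := by
          apply hop a'' w ha'' hxa'' hw ?_
          calc dist a'' w ≤ dist a'' z₂ + dist z₂ z₁ + dist z₁ w := dist_triangle4 _ _ _ _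
            _ ≤ 3 * r := by linarith [dist_comm a'' z₂]
        have habs : |u (xb i) - u w| ≤ 2 * (r * G) := by
          calc |u (xb i) - u w| ≤ |u (xb i) - u a''| + |u a'' - u w| := abs_sub_le _ _ _
            _ ≤ 2 * (r * G) := by linarith
        exact mul_le_mul_of_nonneg_right habs (hφ01 i z₂).1
      have hPbound : |P z₂ - u w| ≤ 2 * (r * G) := by
        rw [hexpand]
        calc |∑ i ∈ s, (u (xb i) - u w) * φ i z₂|
            ≤ ∑ i ∈ s, |(u (xb i) - u w) * φ i z₂| := Finset.abs_sum_le_sum_abs _ _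
          _ ≤ ∑ i ∈ s, 2 * (r * G) * φ i z₂ := by
            apply Finset.sum_le_sum
            intro i hi
            rw [abs_mul, abs_of_nonneg (hφ01 i z₂).1]
            exact hterm i hi
          _ = 2 * (r * G) * ∑ i ∈ s, φ i z₂ := by rw [← Finset.mul_sum]
          _ = 2 * (r * G) := by rw [hsum1, mul_one]
      have h16 : r ≤ 16 / 3 * dist z₂ z₁ := by linarith
      have hGz : 0 ≤ G * dist z₂ z₁ := mul_nonneg hGnn dist_nonneg
      have hfinal : 2 * (r * G) ≤ 640 * C₀ ^ 2 * G * dist z₂ z₁ := by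
        nlinarith [mul_le_mul_of_nonneg_left h16 hGnn,
          mul_nonneg (show (0:ℝ) ≤ C₀ ^ 2 - 1 by linarith) hGz]
      linarith
  -- main case analysis
  by_cases hx : x ∈ O
  · by_cases hy : y ∈ O
    · -- both points in `O`
      obtain ⟨hfx, hcx⟩ := hφcount x hx
      obtain ⟨hfy, hcy⟩ := hφcount y hy
      set s : Finset ι := hfx.toFinset ∪ hfy.toFinset with hsdef
      have hPx : P x = ∑ i ∈ s, u (xb i) * φ i x := by
        rw [hP2 x hx]
        apply tsum_eq_sum
        intro i hi
        have hz : φ i x = 0 := by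
          by_contra hc
          exact hi (Finset.mem_union_left _ (hfx.mem_toFinset.2 hc))
        rw [hz, mul_zero]
      have hPy : P y = ∑ i ∈ s, u (xb i) * φ i y := by
        rw [hP2 y hy]
        apply tsum_eq_sum
        intro i hi
        have hz : φ i y = 0 := by
          by_contra hc
          exact hi (Finset.mem_union_right _ (hfy.mem_toFinset.2 hc))
        rw [hz, mul_zero]
      have hsx : ∑ i ∈ s, φ i x = 1 := by
        rw [← hφsum x hx]
        symm
        apply tsum_eq_sum
        intro i hi
        by_contra hc
        exact hi (Finset.mem_union_left _ (hfx.mem_toFinset.2 hc))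
      have hsy : ∑ i ∈ s, φ i y = 1 := by
        rw [← hφsum y hy]
        symm
        apply tsum_eq_sum
        intro i hi
        by_contra hc
        exact hi (Finset.mem_union_right _ (hfy.mem_toFinset.2 hc))
      -- choose a Whitney ball containing x
      have hxcov : x ∈ ⋃ i, ball (c i) (rad i) := by rw [← hcover]; exact hx
      obtain ⟨i₀, hi₀⟩ := Set.mem_iUnion.1 hxcov
      have hi₀' : dist x (c i₀) < rad i₀ := mem_ball.1 hi₀
      have hrad₀pos : 0 < rad i₀ := lt_of_le_of_lt dist_nonneg hi₀'
      have hxball₀ : x ∈ ball (c i₀) (2 * rad i₀) := mem_ball.2 (by linarith)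
      obtain ⟨-, hl₀, hu₀, hd₀⟩ := whit i₀ x hxball₀
      have hrad₀ : rad i₀ < r / 6 := hradr i₀ x hxball₀
      obtain ⟨a, ha, hxa⟩ := hmaxsep x
      have hexpand : ∑ i ∈ s, (u (xb i) - u (xb i₀)) * (φ i x - φ i y) = P x - P y := by
        have he : ∀ i ∈ s, (u (xb i) - u (xb i₀)) * (φ i x - φ i y)
            = (u (xb i) * φ i x - u (xb i) * φ i y) - u (xb i₀) * (φ i x - φ i y) :=
          fun i _ => by ring
        rw [Finset.sum_congr rfl he, Finset.sum_sub_distrib, Finset.sum_sub_distrib,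
          ← Finset.mul_sum, Finset.sum_sub_distrib, hsx, hsy, hPx, hPy]
        ring
      have h3rG : (0:ℝ) ≤ 3 * (r * G) := by nlinarith [mul_nonneg hr.le hGnn]
      have hconst : 0 ≤ 320 * C₀ * (G * dist x y) := by
        nlinarith [mul_nonneg (show (0:ℝ) ≤ C₀ - 1 by linarith) hGdxy, hGdxy]
      have hterm : ∀ i ∈ s, |u (xb i) - u (xb i₀)| * |φ i x - φ i y|
          ≤ 320 * C₀ * (G * dist x y) := by
        intro i hi
        rcases eq_or_ne (φ i x) (φ i y) with heq | hneq
        · rw [heq, sub_self, abs_zero, mul_zero]; exact hconst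
        rcases eq_or_ne (xb i) (xb i₀) with heqb | hneb
        · rw [heqb, sub_self, abs_zero, zero_mul]; exact hconst
        have hzex : ∃ z : X, z ∈ ball (c i) (2 * rad i) ∧ dist x z ≤ dist x y := by
          rcases ne_or_eq (φ i x) 0 with h0 | h0
          · exact ⟨x, hsupp' i x h0, by simpa using dist_nonneg⟩
          · have hy0 : φ i y ≠ 0 := fun hc => hneq (by rw [h0, hc])
            exact ⟨y, hsupp' i y hy0, le_refl _⟩
        obtain ⟨z, hzball, hxz⟩ := hzex
        obtain ⟨hrpi, hli, hui, hdi⟩ := whit i z hzball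
        have hradi6 : rad i < r / 6 := hradr i z hzball
        have hzd1 : infDist z Oᶜ ≤ infDist x Oᶜ + dist x y := by
          have hh : infDist z Oᶜ ≤ infDist x Oᶜ + dist z x := infDist_le_infDist_add_dist
          have := dist_comm z x
          linarith
        have hzd2 : infDist x Oᶜ - dist x y ≤ infDist z Oᶜ := by
          have hh : infDist x Oᶜ ≤ infDist z Oᶜ + dist x z := infDist_le_infDist_add_dist
          linarith
        obtain ⟨a'', ha'', hza''⟩ := hmaxsep z
        have hxa'' : dist x a'' < 3 * r := by
          calc dist x a'' ≤ dist x z + dist z a'' := dist_triangle _ _ _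
            _ < 3 * r := by linarith
        have hA : |u (xb i) - u (xb i₀)| ≤ 3 * (r * G) := by
          have h1 : |u (xb i) - u a''| ≤ r * G := by
            rw [abs_sub_comm]
            apply hop a'' (xb i) ha'' hxa'' (hxb i).1 ?_
            calc dist a'' (xb i) ≤ dist a'' z + dist z (xb i) := dist_triangle _ _ _
              _ ≤ 3 * r := by linarith [dist_comm a'' z]
          have h2 : |u a'' - u a| ≤ r * G := by
            apply hop a'' a ha'' hxa'' ha ?_
            calc dist a'' a ≤ dist a'' z + dist z x + dist x a := dist_triangle4 _ _ _ _
              _ ≤ 3 * r := by linarith [dist_comm a'' z, dist_comm z x]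
          have h3 : |u a - u (xb i₀)| ≤ r * G := by
            apply hop a (xb i₀) ha (by linarith) (hxb i₀).1 ?_
            calc dist a (xb i₀) ≤ dist a x + dist x (xb i₀) := dist_triangle _ _ _
              _ ≤ 3 * r := by linarith [dist_comm a x]
          calc |u (xb i) - u (xb i₀)|
              ≤ |u (xb i) - u a''| + |u a'' - u (xb i₀)| := abs_sub_le _ _ _
            _ ≤ |u (xb i) - u a''| + (|u a'' - u a| + |u a - u (xb i₀)|) := by
                linarith [abs_sub_le (u a'') (u a) (u (xb i₀))]
            _ ≤ 3 * (r * G) := by linarith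
        have hBB : r / 2 ≤ 8 / 3 * dist x y + 10 / 3 * infDist x Oᶜ := by
          have hsepib : r ≤ dist (xb i) (xb i₀) := hsep _ (hxb i).1 _ (hxb i₀).1 hneb
          have ht : dist (xb i) (xb i₀) ≤ dist (xb i) z + dist z x + dist x (xb i₀) :=
            dist_triangle4 _ _ _ _
          linarith [dist_comm (xb i) z, dist_comm z x]
        by_cases hcase : infDist x Oᶜ ≤ 4 * dist x y
        · have hdxy : r / 32 ≤ dist x y := by linarith
          have hφb : |φ i x - φ i y| ≤ 2 := by
            have h1 := hφ01 i x
            have h2 := hφ01 i y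
            rw [abs_le]
            constructor <;> [linarith [h1.1, h2.2]; linarith [h1.2, h2.1]]
          calc |u (xb i) - u (xb i₀)| * |φ i x - φ i y| ≤ (3 * (r * G)) * 2 :=
              mul_le_mul hA hφb (abs_nonneg _) h3rG
            _ ≤ 320 * C₀ * (G * dist x y) := by
              nlinarith [mul_le_mul_of_nonneg_left
                  (show r ≤ 32 * dist x y from by linarith) hGnn,
                mul_nonneg (show (0:ℝ) ≤ C₀ - 1 from by linarith) hGdxy]
        · push_neg at hcase
          have hd8 : r / 8 ≤ infDist x Oᶜ := by linarith
          have hradlow : 3 * r / 320 ≤ rad i := by linarith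
          have hφb : |φ i x - φ i y| ≤ 320 * C₀ / (3 * r) * dist x y := by
            refine (hφlip i x y).trans ?_
            apply mul_le_mul_of_nonneg_right ?_ dist_nonneg
            rw [div_le_div_iff₀ hrpi (by linarith)]
            nlinarith [mul_nonneg (show (0:ℝ) ≤ C₀ by linarith)
              (show (0:ℝ) ≤ 320 * rad i - 3 * r by linarith)]
          calc |u (xb i) - u (xb i₀)| * |φ i x - φ i y|
              ≤ (3 * (r * G)) * (320 * C₀ / (3 * r) * dist x y) :=
              mul_le_mul hA hφb (abs_nonneg _) h3rG
            _ = 320 * C₀ * (G * dist x y) := by field_simp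
      have hsumb : |P x - P y| ≤ (s.card : ℝ) * (320 * C₀ * (G * dist x y)) := by
        rw [← hexpand]
        calc |∑ i ∈ s, (u (xb i) - u (xb i₀)) * (φ i x - φ i y)|
            ≤ ∑ i ∈ s, |(u (xb i) - u (xb i₀)) * (φ i x - φ i y)| :=
            Finset.abs_sum_le_sum_abs _ _
          _ ≤ ∑ i ∈ s, 320 * C₀ * (G * dist x y) :=
            Finset.sum_le_sum fun i hi => by rw [abs_mul]; exact hterm i hi
          _ = s.card * (320 * C₀ * (G * dist x y)) := by
            rw [Finset.sum_const, nsmul_eq_mul]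
      have hcards : (s.card : ℝ) ≤ 2 * C₀ := by
        have h1 : s.card ≤ hfx.toFinset.card + hfy.toFinset.card := Finset.card_union_le _ _
        have h2 : (hfx.toFinset.card : ℝ) ≤ C₀ := by
          rw [← Set.ncard_eq_toFinset_card _ hfx]; exact hcx
        have h3 : (hfy.toFinset.card : ℝ) ≤ C₀ := by
          rw [← Set.ncard_eq_toFinset_card _ hfy]; exact hcy
        calc ((s.card : ℕ) : ℝ) ≤ ((hfx.toFinset.card + hfy.toFinset.card : ℕ) : ℝ) := by
              exact_mod_cast h1
          _ ≤ 2 * C₀ := by push_cast; linarith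
      calc |P x - P y| ≤ (s.card : ℝ) * (320 * C₀ * (G * dist x y)) := hsumb
        _ ≤ 2 * C₀ * (320 * C₀ * (G * dist x y)) :=
          mul_le_mul_of_nonneg_right hcards hconst
        _ = 640 * C₀ ^ 2 * G * dist x y := by ring
    · -- x ∈ O, y in some ball
      have hyU : y ∈ ⋃ w ∈ Xr, closedBall w (r / 4) := by
        rw [← hOc]; exact Set.mem_compl hy
      obtain ⟨w, hw, hyw⟩ := Set.mem_iUnion₂.1 hyU
      have hPy : P y = u w := hP1 w hw y hyw
      have hm := mixed y x w hw hyw hx (by simpa using dist_nonneg) hxy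
      rw [hPy]
      exact hm
  · -- y ∈ O (or not), x in some ball
    have hxU : x ∈ ⋃ w ∈ Xr, closedBall w (r / 4) := by
      rw [← hOc]; exact Set.mem_compl hx
    obtain ⟨w, hw, hxw⟩ := Set.mem_iUnion₂.1 hxU
    have hPx : P x = u w := hP1 w hw x hxw
    by_cases hy : y ∈ O
    · have hm := mixed x y w hw hxw hy (le_refl _) (by rwa [dist_comm])
      rw [hPx, abs_sub_comm]
      calc |P y - u w| ≤ 640 * C₀ ^ 2 * G * dist y x := hm
        _ = 640 * C₀ ^ 2 * G * dist x y := by rw [dist_comm y x]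
    · -- both in balls
      have hyU : y ∈ ⋃ w ∈ Xr, closedBall w (r / 4) := by
        rw [← hOc]; exact Set.mem_compl hy
      obtain ⟨w', hw', hyw'⟩ := Set.mem_iUnion₂.1 hyU
      have hPy : P y = u w' := hP1 w' hw' y hyw'
      rw [hPx, hPy]
      have hxwd : dist x w ≤ r / 4 := mem_closedBall.1 hxw
      have hyw'd : dist y w' ≤ r / 4 := mem_closedBall.1 hyw'
      rcases eq_or_ne w w' with rfl | hne
      · rw [sub_self, abs_zero]
        nlinarith
      · have ht : dist w w' ≤ dist w x + dist x y + dist y w' := dist_triangle4 _ _ _ _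
        have hww' : dist w w' ≤ 3 * r := by linarith [dist_comm w x]
        have h1 : |u w - u w'| ≤ r * G :=
          hop w w' hw (by linarith [dist_comm w x]) hw' hww'
        have h2 : r ≤ dist w w' := hsep _ hw _ hw' hne
        have h3 : r / 2 ≤ dist x y := by linarith [dist_comm w x]
        calc |u w - u w'| ≤ r * G := h1
          _ ≤ 640 * C₀ ^ 2 * G * dist x y := by
            nlinarith [mul_le_mul_of_nonneg_left
                (show r ≤ 2 * dist x y from by linarith) hGnn,
              mul_nonneg (show (0:ℝ) ≤ C₀ ^ 2 - 1 from by linarith) hGdxy]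
end

section
/- Let f : X → ℝ be a function on a metric space X and suppose that for some constant C > 0 and some function h : X → [0,∞], for every rectifiable curve γ : [a,b] → X of length less than r one has |f(γ(b)) − f(γ(a))| ≤ C (sup_{z ∈ B(γ(b), 3r)} h(z)) · length(γ). Then the function g(x) = C sup_{z ∈ B(x, 4r)} h(z) is an upper gradient of f, i.e., |f(γ(b)) − f(γ(a))| ≤ ∫_γ g ds for every rectifiable curve γ. -/
open Metric
open scoped ENNReal

/-- `g` is an upper gradient of `f`: along every rectifiable curve (unit-speed,
`1`-Lipschitz on `[0,L]`), `|f(γ(L)) - f(γ(0))| ≤ ∫_γ g ds`. -/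
def IsUpperGradient {X : Type*} [MetricSpace X]
    (f : X → ℝ) (g : X → ℝ≥0∞) : Prop :=
  ∀ (L : ℝ) (γ : ℝ → X), 0 ≤ L → LipschitzOnWith 1 γ (Set.Icc 0 L) →
    ENNReal.ofReal |f (γ L) - f (γ 0)| ≤ ∫⁻ t in Set.Icc (0 : ℝ) L, g (γ t)

/-- If `f` satisfies the local estimate
`|f(γ(b)) - f(γ(a))| ≤ C (sup_{B(γ(b),3r)} h) · length(γ)` for all rectifiable
curves of length `< r`, then `x ↦ C · sup_{B(x,4r)} h` is an upper gradient of `f`. -/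
theorem stmt_13 {X : Type*} [MetricSpace X] (r : ℝ) (hr : 0 < r)
    (f : X → ℝ) (h : X → ℝ≥0∞) (C : ℝ≥0∞) (hC : 0 < C)
    (hloc : ∀ (L : ℝ) (γ : ℝ → X), 0 ≤ L → L < r → LipschitzOnWith 1 γ (Set.Icc 0 L) →
      ENNReal.ofReal |f (γ L) - f (γ 0)| ≤
        C * (⨆ z ∈ ball (γ L) (3 * r), h z) * ENNReal.ofReal L) :
    IsUpperGradient f (fun x => C * ⨆ z ∈ ball x (4 * r), h z) := by
  intro L γ hL hlip
  set n : ℕ := ⌈L / r⌉₊ + 1 with hn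
  have hnpos : 0 < (n : ℝ) := by positivity
  set δ : ℝ := L / n with hδdef
  have hδ0 : 0 ≤ δ := div_nonneg hL hnpos.le
  have hδr : δ < r := by
    rw [hδdef, div_lt_iff₀ hnpos]
    have h1 : L / r < (n : ℝ) := by
      calc L / r ≤ (⌈L / r⌉₊ : ℝ) := Nat.le_ceil _
        _ < (n : ℝ) := by rw [hn]; push_cast; linarith
    have h2 : L < (n : ℝ) * r := (div_lt_iff₀ hr).mp h1
    nlinarith
  have hnδ : (n : ℝ) * δ = L := by
    rw [hδdef]; field_simp
  -- key induction
  have key : ∀ k : ℕ, k ≤ n →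
      ENNReal.ofReal |f (γ ((k : ℝ) * δ)) - f (γ 0)| ≤
        ∫⁻ t in Set.Icc (0 : ℝ) ((k : ℝ) * δ),
          (fun x => C * ⨆ z ∈ ball x (4 * r), h z) (γ t) := by
    intro k hkn
    induction k with
    | zero => simp
    | succ k ih =>
      have hk' : k ≤ n := Nat.le_of_succ_le hkn
      have hk1n : ((k : ℝ) + 1) ≤ (n : ℝ) := by exact_mod_cast hkn
      have hkk1 : (k : ℝ) * δ ≤ ((k : ℝ) + 1) * δ := by nlinarith
      have hk0 : 0 ≤ (k : ℝ) * δ := by positivity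
      have hk1L : ((k : ℝ) + 1) * δ ≤ L := by
        rw [← hnδ]; nlinarith
      have hkL : (k : ℝ) * δ ≤ L := le_trans hkk1 hk1L
      -- apply hloc to the subcurve t ↦ γ (k*δ + t)
      have hliploc : LipschitzOnWith 1 (fun t => γ ((k : ℝ) * δ + t)) (Set.Icc 0 δ) := by
        intro s hs t ht
        have hsmem : (k : ℝ) * δ + s ∈ Set.Icc (0 : ℝ) L :=
          ⟨by linarith [hs.1], by linarith [hs.2]⟩
        have htmem : (k : ℝ) * δ + t ∈ Set.Icc (0 : ℝ) L :=
          ⟨by linarith [ht.1], by linarith [ht.2]⟩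
        calc edist (γ ((k : ℝ) * δ + s)) (γ ((k : ℝ) * δ + t))
            ≤ 1 * edist ((k : ℝ) * δ + s) ((k : ℝ) * δ + t) := hlip hsmem htmem
          _ = 1 * edist s t := by rw [edist_add_left]
      have hsub := hloc δ (fun t => γ ((k : ℝ) * δ + t)) hδ0 hδr hliploc
      simp only [add_zero] at hsub
      have hend : (k : ℝ) * δ + δ = ((k : ℝ) + 1) * δ := by ring
      rw [hend] at hsub
      -- pointwise bound on Ioc (k*δ) ((k+1)*δ)
      have hpt : ∀ t ∈ Set.Ioc ((k : ℝ) * δ) (((k : ℝ) + 1) * δ),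
          C * (⨆ z ∈ ball (γ (((k : ℝ) + 1) * δ)) (3 * r), h z) ≤
            (fun x => C * ⨆ z ∈ ball x (4 * r), h z) (γ t) := by
        intro t ht
        have htmem : t ∈ Set.Icc (0 : ℝ) L := ⟨by linarith [ht.1], by linarith [ht.2]⟩
        have hemem : ((k : ℝ) + 1) * δ ∈ Set.Icc (0 : ℝ) L := ⟨by linarith, hk1L⟩
        have hdist : dist (γ (((k : ℝ) + 1) * δ)) (γ t) ≤ δ := by
          have := (hlip.dist_le_mul _ hemem _ htmem)
          rw [NNReal.coe_one, one_mul] at this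
          refine this.trans ?_
          rw [Real.dist_eq, abs_of_nonneg (by linarith [ht.2])]
          linarith [ht.1]
        refine mul_le_mul_right ?_ C
        refine biSup_mono fun z hz => ?_
        have : dist z (γ t) < 4 * r := by
          calc dist z (γ t) ≤ dist z (γ (((k : ℝ) + 1) * δ)) + dist (γ (((k : ℝ) + 1) * δ)) (γ t) :=
                dist_triangle _ _ _
            _ < 3 * r + r := by
                have := mem_ball.mp hz
                linarith [lt_of_le_of_lt hdist hδr]
            _ = 4 * r := by ring
        exact mem_ball.mpr this
      -- integral lower bound on the Ioc piece
      have hIoc : C * (⨆ z ∈ ball (γ (((k : ℝ) + 1) * δ)) (3 * r), h z) * ENNReal.ofReal δ ≤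
          ∫⁻ t in Set.Ioc ((k : ℝ) * δ) (((k : ℝ) + 1) * δ),
            (fun x => C * ⨆ z ∈ ball x (4 * r), h z) (γ t) := by
        have hvol : (MeasureTheory.volume (Set.Ioc ((k : ℝ) * δ) (((k : ℝ) + 1) * δ))) = ENNReal.ofReal δ := by
          rw [Real.volume_Ioc]; congr 1; ring
        calc C * (⨆ z ∈ ball (γ (((k : ℝ) + 1) * δ)) (3 * r), h z) * ENNReal.ofReal δ
            = ∫⁻ _ in Set.Ioc ((k : ℝ) * δ) (((k : ℝ) + 1) * δ),
                (C * ⨆ z ∈ ball (γ (((k : ℝ) + 1) * δ)) (3 * r), h z) := by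
              rw [MeasureTheory.setLIntegral_const, hvol]
          _ ≤ _ := MeasureTheory.setLIntegral_mono' measurableSet_Ioc hpt
      -- split the integral
      have hsplit : ∫⁻ t in Set.Icc (0 : ℝ) (((k : ℝ) + 1) * δ),
          (fun x => C * ⨆ z ∈ ball x (4 * r), h z) (γ t)
          = (∫⁻ t in Set.Icc (0 : ℝ) ((k : ℝ) * δ),
              (fun x => C * ⨆ z ∈ ball x (4 * r), h z) (γ t))
            + ∫⁻ t in Set.Ioc ((k : ℝ) * δ) (((k : ℝ) + 1) * δ),
              (fun x => C * ⨆ z ∈ ball x (4 * r), h z) (γ t) := by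
        rw [← MeasureTheory.lintegral_add_measure, ← MeasureTheory.Measure.restrict_union ?hdisj
          measurableSet_Ioc, Set.Icc_union_Ioc_eq_Icc hk0 hkk1]
        case hdisj =>
          rw [Set.disjoint_left]
          rintro x ⟨-, hx2⟩ ⟨hx3, -⟩
          exact absurd hx2 (not_le.mpr hx3)
      -- combine
      have htri : |f (γ (((k : ℝ) + 1) * δ)) - f (γ 0)| ≤
          |f (γ ((k : ℝ) * δ)) - f (γ 0)| + |f (γ (((k : ℝ) + 1) * δ)) - f (γ ((k : ℝ) * δ))| := by
        have := abs_sub_abs_le_abs_sub (f (γ (((k : ℝ) + 1) * δ))) (f (γ ((k : ℝ) * δ)))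
        calc |f (γ (((k : ℝ) + 1) * δ)) - f (γ 0)|
            = |(f (γ ((k : ℝ) * δ)) - f (γ 0)) + (f (γ (((k : ℝ) + 1) * δ)) - f (γ ((k : ℝ) * δ)))| := by
              ring_nf
          _ ≤ _ := abs_add_le _ _
      have hcast : ((k + 1 : ℕ) : ℝ) = (k : ℝ) + 1 := by push_cast; ring
      rw [hcast, hsplit]
      calc ENNReal.ofReal |f (γ (((k : ℝ) + 1) * δ)) - f (γ 0)|
          ≤ ENNReal.ofReal (|f (γ ((k : ℝ) * δ)) - f (γ 0)| +
              |f (γ (((k : ℝ) + 1) * δ)) - f (γ ((k : ℝ) * δ))|) := ENNReal.ofReal_le_ofReal htri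
        _ ≤ ENNReal.ofReal |f (γ ((k : ℝ) * δ)) - f (γ 0)| +
              ENNReal.ofReal |f (γ (((k : ℝ) + 1) * δ)) - f (γ ((k : ℝ) * δ))| :=
            ENNReal.ofReal_add_le
        _ ≤ _ := add_le_add (ih hk') (hsub.trans hIoc)
  have := key n le_rfl
  rwa [hnδ] at this
end
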